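/- Suppose there exist δ ∈ ℝ and C > 0 such that for every λ ≥ 1 and the specific cut-off ψ with ψ = 1 on the ball of radius 1/2 and ψ = 0 outside the unit ball, the estimate ‖∫_ℝ e^{iλ(xt²+y²t)} ψ(x,y,t) f(t) dt‖_{L²(dx dy)} ≤ C λ^{-δ} ‖f‖_{L²(ℝ)} holds for all f ∈ L²(ℝ). Then δ ≤ 1/2. -/

import Mathlib

open MeasureTheory Real ENNReal

set_option maxHeartbeats 800000 in
private lemma stmt13_inner (L r : ℝ) (hL0 : 0 < L) (hr0 : 0 < r) (hr4 : r ≤ 1/4)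
    (hLr3 : L * r ^ 3 = 1/64) (ψ : ℝ → ℝ → ℝ → ℂ)
    (hψ1 : ∀ x y t : ℝ, x ^ 2 + y ^ 2 + t ^ 2 ≤ (1 / 2 : ℝ) ^ 2 → ψ x y t = 1)
    (x y : ℝ) (hx : |x| ≤ r) (hy : |y| ≤ r) :
    r / 2 ≤ ‖∫ t : ℝ, Complex.exp (Complex.I * (L : ℂ) * (((x * t ^ 2 + y ^ 2 * t : ℝ)) : ℂ)) *
      ψ x y t * (Set.Icc (0:ℝ) r).indicator (fun _ => (1:ℂ)) t‖ := by
  obtain ⟨hx1, hx2⟩ := abs_le.mp hx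
  obtain ⟨hy1, hy2⟩ := abs_le.mp hy
  set g : ℝ → ℂ := fun t => Complex.exp (Complex.I * (L : ℂ) * (((x * t ^ 2 + y ^ 2 * t : ℝ)) : ℂ))
    with hg
  have hgcont : Continuous g := by
    apply Complex.continuous_exp.comp
    fun_prop
  have hrewrite : (fun t : ℝ => Complex.exp (Complex.I * (L : ℂ) *
        (((x * t ^ 2 + y ^ 2 * t : ℝ)) : ℂ)) *
      ψ x y t * (Set.Icc (0:ℝ) r).indicator (fun _ => (1:ℂ)) t)
      = (Set.Icc (0:ℝ) r).indicator g := by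
    funext t
    by_cases ht : t ∈ Set.Icc (0:ℝ) r
    · obtain ⟨ht1, ht2⟩ := Set.mem_Icc.mp ht
      have hψ : ψ x y t = 1 := hψ1 x y t (by nlinarith)
      rw [Set.indicator_of_mem ht, Set.indicator_of_mem ht, hψ, hg]
      ring
    · rw [Set.indicator_of_notMem ht, Set.indicator_of_notMem ht, mul_zero]
  rw [hrewrite, integral_indicator measurableSet_Icc]
  have hgint : IntegrableOn g (Set.Icc 0 r) := hgcont.integrableOn_Icc
  have hre : (∫ t in Set.Icc (0:ℝ) r, g t).re
      = ∫ t in Set.Icc (0:ℝ) r, Real.cos (L * (x * t ^ 2 + y ^ 2 * t)) := by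
    rw [show (∫ t in Set.Icc (0:ℝ) r, g t).re
        = RCLike.re (∫ t in Set.Icc (0:ℝ) r, g t) from rfl, ← integral_re hgint]
    apply setIntegral_congr_fun measurableSet_Icc
    intro t _
    have h1 : Complex.I * (L : ℂ) * (((x * t ^ 2 + y ^ 2 * t : ℝ)) : ℂ)
        = ((L * (x * t ^ 2 + y ^ 2 * t) : ℝ) : ℂ) * Complex.I := by push_cast; ring
    simp only [hg, h1, RCLike.re_to_complex, Complex.exp_ofReal_mul_I_re]
  have hcos : ∀ t ∈ Set.Icc (0:ℝ) r,
      (1/2 : ℝ) ≤ Real.cos (L * (x * t ^ 2 + y ^ 2 * t)) := by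
    intro t ht
    obtain ⟨ht1, ht2⟩ := Set.mem_Icc.mp ht
    set θ := L * (x * t ^ 2 + y ^ 2 * t) with hθ
    have ht2' : t ^ 2 ≤ r ^ 2 := by nlinarith
    have hb1 : x * t ^ 2 ≤ r ^ 3 := by nlinarith
    have hb2 : -(r^3) ≤ x * t ^ 2 := by nlinarith
    have hy2' : y ^ 2 ≤ r ^ 2 := by
      nlinarith [mul_nonneg (by linarith : (0:ℝ) ≤ r - y) (by linarith : (0:ℝ) ≤ r + y)]
    have hb3 : y ^ 2 * t ≤ r ^ 3 := by
      nlinarith [mul_le_mul_of_nonneg_right hy2' ht1,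
        mul_le_mul_of_nonneg_left ht2 (sq_nonneg r)]
    have hb4 : 0 ≤ y ^ 2 * t := mul_nonneg (sq_nonneg y) ht1
    have hsum1 : x * t ^ 2 + y ^ 2 * t ≤ 2 * r ^ 3 := by linarith
    have hsum2 : -(2 * r ^ 3) ≤ x * t ^ 2 + y ^ 2 * t := by linarith
    have hθ1 : θ ≤ 1/32 := by
      nlinarith [mul_le_mul_of_nonneg_left hsum1 hL0.le]
    have hθ2 : -(1/32) ≤ θ := by
      nlinarith [mul_le_mul_of_nonneg_left hsum2 hL0.le]
    have hc := Real.one_sub_sq_div_two_le_cos (x := θ)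
    have hθsq : θ ^ 2 ≤ 1 := by
      nlinarith [mul_nonneg (by linarith : (0:ℝ) ≤ 1/32 - θ) (by linarith : (0:ℝ) ≤ θ + 1/32)]
    linarith
  have hcint : IntegrableOn (fun t => Real.cos (L * (x * t ^ 2 + y ^ 2 * t)))
      (Set.Icc (0:ℝ) r) := (Real.continuous_cos.comp (by fun_prop)).integrableOn_Icc
  have hvol : volume (Set.Icc (0:ℝ) r) ≠ ⊤ := by simp [Real.volume_Icc]
  have hlow : r / 2 ≤ (∫ t in Set.Icc (0:ℝ) r, g t).re := by
    rw [hre]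
    have := setIntegral_ge_of_const_le (μ := volume) (c := (1/2 : ℝ))
      measurableSet_Icc hvol hcos hcint
    rw [measureReal_def, Real.volume_Icc, sub_zero, toReal_ofReal hr0.le, smul_eq_mul] at this
    linarith
  calc r / 2 ≤ (∫ t in Set.Icc (0:ℝ) r, g t).re := hlow
    _ ≤ |(∫ t in Set.Icc (0:ℝ) r, g t).re| := le_abs_self _
    _ ≤ ‖∫ t in Set.Icc (0:ℝ) r, g t‖ := Complex.abs_re_le_norm _

set_option maxHeartbeats 1600000 in
/-- Sharpness of the `L² → L²` decay: if for a cut-off `ψ` which is `1` on the ball of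
radius `1/2` and `0` outside the unit ball, the estimate
`‖𝒪_λ f‖_{L²(ℝ²)} ≤ C λ^{-δ} ‖f‖_{L²}` holds for all `λ ≥ 1` and `f ∈ L²`,
then `δ ≤ 1/2`. -/
theorem stmt13 (δ C : ℝ) (hC : 0 < C) (ψ : ℝ → ℝ → ℝ → ℂ)
    (hψcont : Continuous (fun p : ℝ × ℝ × ℝ => ψ p.1 p.2.1 p.2.2))
    (hψ1 : ∀ x y t : ℝ, x ^ 2 + y ^ 2 + t ^ 2 ≤ (1 / 2 : ℝ) ^ 2 → ψ x y t = 1)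
    (hψ0 : ∀ x y t : ℝ, 1 ≤ x ^ 2 + y ^ 2 + t ^ 2 → ψ x y t = 0)
    (hest : ∀ L : ℝ, 1 ≤ L → ∀ f : ℝ → ℂ, MemLp f 2 volume →
      eLpNorm (fun p : ℝ × ℝ => ∫ t : ℝ,
          Complex.exp (Complex.I * (L : ℂ) * (((p.1 * t ^ 2 + p.2 ^ 2 * t : ℝ)) : ℂ)) *
            ψ p.1 p.2 t * f t) 2 volume ≤
        ENNReal.ofReal (C * L ^ (-δ)) * eLpNorm f 2 volume) :
    δ ≤ 1 / 2 := by
  by_contra hδ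
  push_neg at hδ
  have key : ∀ L : ℝ, 1 ≤ L → L ^ (δ - 1/2) ≤ 8 * C := by
    intro L hL
    have hL0 : (0:ℝ) < L := lt_of_lt_of_le one_pos hL
    set A : ℝ := L ^ (-(1/3) : ℝ) with hA
    have hA0 : 0 < A := Real.rpow_pos_of_pos hL0 _
    have hA1 : A ≤ 1 := Real.rpow_le_one_of_one_le_of_nonpos hL (by norm_num)
    set r : ℝ := A / 4 with hrdef
    have hr0 : 0 < r := by positivity
    have hr4 : r ≤ 1/4 := by rw [hrdef]; linarith
    have hA3 : A ^ (3:ℕ) = L ^ (-1 : ℝ) := by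
      rw [hA, ← Real.rpow_natCast (L ^ (-(1/3):ℝ)) 3, ← Real.rpow_mul hL0.le]
      norm_num
    have hLr3 : L * r ^ 3 = 1/64 := by
      have hLinv : L * L ^ (-1 : ℝ) = 1 := by
        rw [Real.rpow_neg_one]
        exact mul_inv_cancel₀ hL0.ne'
      have : r ^ 3 = A ^ 3 / 64 := by rw [hrdef]; ring
      rw [this]
      push_cast at hA3
      rw [hA3]
      linarith
    set f : ℝ → ℂ := (Set.Icc (0:ℝ) r).indicator (fun _ => (1:ℂ)) with hf
    have hfmem : MemLp f 2 volume :=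
      memLp_indicator_const 2 measurableSet_Icc 1 (Or.inr (by simp [Real.volume_Icc]))
    have hestL := hest L hL f hfmem
    -- compute eLpNorm f
    have hfnorm : eLpNorm f 2 volume = ENNReal.ofReal (r ^ ((1:ℝ)/2)) := by
      rw [hf, eLpNorm_indicator_const measurableSet_Icc two_ne_zero ENNReal.ofNat_ne_top]
      simp only [nnnorm_one, enorm_one, ENNReal.coe_one, one_mul, Real.volume_Icc, sub_zero,
        ENNReal.toReal_ofNat]
      rw [← ENNReal.ofReal_rpow_of_pos hr0]
    -- lower bound for LHS
    set s2 : Set (ℝ × ℝ) := Set.Icc (-r) r ×ˢ Set.Icc (-r) r with hs2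
    have hs2m : MeasurableSet s2 := measurableSet_Icc.prod measurableSet_Icc
    have hmono : eLpNorm (s2.indicator (fun _ => ((r/2 : ℝ) : ℂ))) 2 volume ≤
        eLpNorm (fun p : ℝ × ℝ => ∫ t : ℝ,
          Complex.exp (Complex.I * (L : ℂ) * (((p.1 * t ^ 2 + p.2 ^ 2 * t : ℝ)) : ℂ)) *
            ψ p.1 p.2 t * f t) 2 volume := by
      apply eLpNorm_mono
      intro p
      by_cases hp : p ∈ s2
      · rw [Set.indicator_of_mem hp]
        obtain ⟨hp1, hp2⟩ := Set.mem_prod.mp hp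
        have h1 : |p.1| ≤ r := abs_le.mpr (Set.mem_Icc.mp hp1)
        have h2 : |p.2| ≤ r := abs_le.mpr (Set.mem_Icc.mp hp2)
        have := stmt13_inner L r hL0 hr0 hr4 hLr3 ψ hψ1 p.1 p.2 h1 h2
        calc ‖((r/2 : ℝ) : ℂ)‖ = r/2 := by
              rw [Complex.norm_real, Real.norm_eq_abs, abs_of_nonneg (by linarith)]
          _ ≤ _ := this
      · rw [Set.indicator_of_notMem hp]
        simp
    have hvols2 : volume s2 = ENNReal.ofReal (2*r) * ENNReal.ofReal (2*r) := by
      rw [hs2, Measure.volume_eq_prod, Measure.prod_prod, Real.volume_Icc]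
      rw [show r - -r = 2 * r by ring]
    have hlhs : eLpNorm (s2.indicator (fun _ => ((r/2 : ℝ) : ℂ))) 2 volume
        = ENNReal.ofReal (r ^ 2) := by
      rw [eLpNorm_indicator_const hs2m two_ne_zero ENNReal.ofNat_ne_top, hvols2]
      rw [← ENNReal.ofReal_mul (by linarith)]
      have h4 : (2*r) * (2*r) = 4 * r^2 := by ring
      rw [h4]
      simp only [ENNReal.toReal_ofNat]
      rw [ENNReal.ofReal_rpow_of_pos (by positivity)]
      have h5 : (4 * r^2) ^ ((1:ℝ)/2) = 2 * r := by
        rw [show 4 * r^2 = (2*r)^(2:ℕ) by ring, ← Real.rpow_natCast (2*r) 2,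
          ← Real.rpow_mul (by linarith)]
        norm_num
      rw [h5, ← ofReal_norm, Complex.norm_real, Real.norm_eq_abs,
        abs_of_nonneg (by linarith : (0:ℝ) ≤ r/2), ← ENNReal.ofReal_mul (by linarith)]
      congr 1
      ring
    -- combine in ℝ≥0∞ and pass to ℝ
    have hchain : ENNReal.ofReal (r ^ 2) ≤ ENNReal.ofReal (C * L ^ (-δ) * r ^ ((1:ℝ)/2)) := by
      rw [← hlhs]
      refine le_trans (le_trans hmono hestL) ?_
      rw [hfnorm, ← ENNReal.ofReal_mul (by positivity)]
    have hreal : r ^ 2 ≤ C * L ^ (-δ) * r ^ ((1:ℝ)/2) :=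
      (ENNReal.ofReal_le_ofReal_iff (by positivity)).mp hchain
    -- rpow algebra
    have hA2 : A ^ (2:ℕ) = L ^ (-(2/3) : ℝ) := by
      rw [hA, ← Real.rpow_natCast (L ^ (-(1/3):ℝ)) 2, ← Real.rpow_mul hL0.le]
      norm_num
    have hAhalf : A ^ ((1:ℝ)/2) = L ^ (-(1/6) : ℝ) := by
      rw [hA, ← Real.rpow_mul hL0.le]
      norm_num
    have hrhalf : r ^ ((1:ℝ)/2) = L ^ (-(1/6) : ℝ) / 2 := by
      rw [hrdef, Real.div_rpow hA0.le (by norm_num), hAhalf]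
      congr 1
      rw [show (4:ℝ) = 2^(2:ℕ) by norm_num, ← Real.rpow_natCast 2 2,
        ← Real.rpow_mul (by norm_num)]
      norm_num
    have hr2 : r ^ 2 = L ^ (-(2/3) : ℝ) / 16 := by
      have : r ^ 2 = A ^ 2 / 16 := by rw [hrdef]; ring
      rw [this]
      push_cast at hA2
      rw [hA2]
    rw [hr2, hrhalf] at hreal
    have hb : L ^ (-(2/3) : ℝ) ≤ 8 * C * (L ^ (-δ) * L ^ (-(1/6) : ℝ)) := by nlinarith
    have pos : (0:ℝ) ≤ L ^ (δ + 1/6 : ℝ) := (Real.rpow_pos_of_pos hL0 _).le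
    have e1 : L ^ (δ - 1/2) = L ^ (δ + 1/6 : ℝ) * L ^ (-(2/3) : ℝ) := by
      rw [← Real.rpow_add hL0]
      ring_nf
    have e2 : L ^ (δ + 1/6 : ℝ) * (L ^ (-δ) * L ^ (-(1/6) : ℝ)) = 1 := by
      rw [← Real.rpow_add hL0, ← Real.rpow_add hL0,
        show δ + 1/6 + (-δ + -(1/6)) = 0 by ring, Real.rpow_zero]
    calc L ^ (δ - 1/2) = L ^ (δ + 1/6 : ℝ) * L ^ (-(2/3) : ℝ) := e1
      _ ≤ L ^ (δ + 1/6 : ℝ) * (8 * C * (L ^ (-δ) * L ^ (-(1/6) : ℝ))) :=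
          mul_le_mul_of_nonneg_left hb pos
      _ = 8 * C * (L ^ (δ + 1/6 : ℝ) * (L ^ (-δ) * L ^ (-(1/6) : ℝ))) := by ring
      _ = 8 * C := by rw [e2, mul_one]
  -- contradiction
  set ε : ℝ := δ - 1/2 with hε
  have hε0 : 0 < ε := by rw [hε]; linarith
  set M : ℝ := max 1 ((8*C+1) ^ ((1:ℝ)/ε)) with hM
  have hM1 : 1 ≤ M := le_max_left _ _
  have h1 := key M hM1
  have hM2 : (8*C+1) ^ ((1:ℝ)/ε) ≤ M := le_max_right _ _
  have h3 : (8*C+1 : ℝ) = ((8*C+1) ^ ((1:ℝ)/ε)) ^ ε := by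
    rw [← Real.rpow_mul (by positivity), one_div, inv_mul_cancel₀ hε0.ne', Real.rpow_one]
  have h2 : (8*C+1 : ℝ) ≤ M ^ ε := by
    rw [h3]
    exact Real.rpow_le_rpow (by positivity) hM2 hε0.le
  linarith
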